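/- arXiv:2401.13289 — 5 statements merged into one kernel-verified Lean document; each statement's English description precedes it below -/
import Mathlib

section
/- Let p be an odd prime and let R be a commutative ring graded by the natural numbers, i.e. R = ⊕_{l≥0} R_l is an internal direct sum of additive subgroups with R_k·R_l ⊆ R_{k+l}. Assume R is a ℚ-algebra and that every element of R whose degree-zero graded component is nonzero is a non-zero-divisor in R. Let a, b ∈ R⟦X⟧ be nonzero formal power series satisfying a^p = b^p. If the degree-zero graded components of the leading coefficients of a and b (the coefficient at the order of a, respectively of b) are equal and nonzero, then a = b. -/
lemma aux_coeff_mul {R : Type*} [CommRing R] (φ ψ : PowerSeries R) (n m : ℕ)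
    (hφ : ∀ i < n, PowerSeries.coeff i φ = 0) (hψ : ∀ i < m, PowerSeries.coeff i ψ = 0) :
    (∀ i < n + m, PowerSeries.coeff i (φ * ψ) = 0) ∧
      PowerSeries.coeff (n + m) (φ * ψ) = PowerSeries.coeff n φ * PowerSeries.coeff m ψ := by
  constructor
  · intro i hi
    rw [PowerSeries.coeff_mul]
    refine Finset.sum_eq_zero fun x hx => ?_
    rw [Finset.HasAntidiagonal.mem_antidiagonal] at hx
    rcases lt_or_ge x.1 n with h | h
    · rw [hφ _ h, zero_mul]
    · have : x.2 < m := by omega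
      rw [hψ _ this, mul_zero]
  · rw [PowerSeries.coeff_mul]
    rw [Finset.sum_eq_single (n, m)]
    · intro x hx hne
      rw [Finset.HasAntidiagonal.mem_antidiagonal] at hx
      rcases lt_or_ge x.1 n with h | h
      · rw [hφ _ h, zero_mul]
      · have : x.2 < m ∨ x = (n, m) := by
          rcases lt_or_ge x.2 m with h2 | h2
          · exact Or.inl h2
          · right; have : x.1 = n := by omega
            exact Prod.ext this (by omega)
        rcases this with h2 | h2
        · rw [hψ _ h2, mul_zero]
        · exact absurd h2 hne
    · intro h; simp [Finset.HasAntidiagonal.mem_antidiagonal] at h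

lemma aux_coeff_pow {R : Type*} [CommRing R] (φ : PowerSeries R) (n : ℕ)
    (hφ : ∀ i < n, PowerSeries.coeff i φ = 0) (k : ℕ) :
    (∀ i < k * n, PowerSeries.coeff i (φ ^ k) = 0) ∧
      PowerSeries.coeff (k * n) (φ ^ k) = (PowerSeries.coeff n φ) ^ k := by
  induction k with
  | zero => simp [PowerSeries.coeff_zero_eq_constantCoeff]
  | succ k ih =>
    have h := aux_coeff_mul (φ ^ k) φ (k * n) n ih.1 hφ
    have e : (k + 1) * n = k * n + n := by ring
    rw [pow_succ, e]
    exact ⟨h.1, by rw [h.2, ih.2, pow_succ]⟩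

/-- **The p-th root uniqueness lemma (Lemma `lemmapthroot`).**
Let `p` be an odd prime and `R` an `ℕ`-graded commutative `ℚ`-algebra
(`R = ⊕_{l ≥ 0} R_l`) in which every element with nonzero degree-zero graded
component is a non-zero-divisor.  If `a, b` are nonzero formal power series
over `R` with `a ^ p = b ^ p`, and the degree-zero graded components of the
leading coefficients of `a` and `b` are equal and nonzero, then `a = b`. -/
theorem powerSeries_pth_root_unique_of_graded
    {R : Type*} [CommRing R] [Algebra ℚ R]
    (𝒜 : ℕ → AddSubgroup R) [GradedRing 𝒜]
    (p : ℕ) (hp : p.Prime) (hodd : Odd p)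
    (hnzd : ∀ r : R, GradedRing.proj 𝒜 0 r ≠ 0 → r ∈ nonZeroDivisors R)
    (a b : PowerSeries R) (ha : a ≠ 0) (hb : b ≠ 0)
    (hpow : a ^ p = b ^ p)
    (hlead :
      GradedRing.proj 𝒜 0
          (PowerSeries.coeff
            (a.order.lift (PowerSeries.order_finite_iff_ne_zero.mpr ha)) a) =
        GradedRing.proj 𝒜 0
          (PowerSeries.coeff
            (b.order.lift (PowerSeries.order_finite_iff_ne_zero.mpr hb)) b))
    (hlead0 :
      GradedRing.proj 𝒜 0
          (PowerSeries.coeff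
            (a.order.lift (PowerSeries.order_finite_iff_ne_zero.mpr ha)) a) ≠ 0) :
    a = b := by
  classical
  have hproj : ∀ r : R, GradedRing.proj 𝒜 0 r = GradedRing.projZeroRingHom 𝒜 r := fun r => rfl
  set π := GradedRing.projZeroRingHom 𝒜 with hπdef
  haveI : Nontrivial R := nontrivial_of_ne _ 0 hlead0
  set n := a.order.lift (PowerSeries.order_finite_iff_ne_zero.mpr ha) with hndef
  set m := b.order.lift (PowerSeries.order_finite_iff_ne_zero.mpr hb) with hmdef
  have hna : ∀ i < n, PowerSeries.coeff i a = 0 := by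
    intro i hi
    apply PowerSeries.coeff_of_lt_order
    rw [← ENat.coe_lift a.order (PowerSeries.order_finite_iff_ne_zero.mpr ha)]
    exact_mod_cast hi
  have hmb : ∀ i < m, PowerSeries.coeff i b = 0 := by
    intro i hi
    apply PowerSeries.coeff_of_lt_order
    rw [← ENat.coe_lift b.order (PowerSeries.order_finite_iff_ne_zero.mpr hb)]
    exact_mod_cast hi
  set L := PowerSeries.coeff n a with hLdef
  set L' := PowerSeries.coeff m b with hL'def
  have hL'0 : GradedRing.proj 𝒜 0 L' ≠ 0 := hlead ▸ hlead0
  have hLnzd : L ∈ nonZeroDivisors R := hnzd L hlead0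
  have hL'nzd : L' ∈ nonZeroDivisors R := hnzd L' hL'0
  have hpa := aux_coeff_pow a n hna p
  have hpb := aux_coeff_pow b m hmb p
  have hppos : 0 < p := hp.pos
  -- first show n = m
  have hnm : n = m := by
    rcases lt_trichotomy n m with h | h | h
    · exfalso
      have h0 : PowerSeries.coeff (p * n) (b ^ p) = 0 :=
        hpb.1 _ (by exact (Nat.mul_lt_mul_left hppos).mpr h)
      rw [← hpow, hpa.2] at h0
      exact nonZeroDivisors.ne_zero (pow_mem hLnzd p) h0
    · exact h
    · exfalso
      have h0 : PowerSeries.coeff (p * m) (a ^ p) = 0 :=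
        hpa.1 _ (by exact (Nat.mul_lt_mul_left hppos).mpr h)
      rw [hpow, hpb.2] at h0
      exact nonZeroDivisors.ne_zero (pow_mem hL'nzd p) h0
  have hnb : ∀ i < n, PowerSeries.coeff i b = 0 := fun i hi => hmb i (hnm ▸ hi)
  have hL'eq : L' = PowerSeries.coeff n b := by rw [hL'def, hnm]
  -- the geometric sum
  set s : PowerSeries R := ∑ i ∈ Finset.range p, a ^ i * b ^ (p - 1 - i) with hsdef
  have hgeom : s * (a - b) = 0 := by
    rw [hsdef, geom_sum₂_mul, hpow, sub_self]
  set N := (p - 1) * n with hNdef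
  have hterm : ∀ i ∈ Finset.range p,
      (∀ j < N, PowerSeries.coeff j (a ^ i * b ^ (p - 1 - i)) = 0) ∧
        PowerSeries.coeff N (a ^ i * b ^ (p - 1 - i)) = L ^ i * L' ^ (p - 1 - i) := by
    intro i hi
    rw [Finset.mem_range] at hi
    have hai := aux_coeff_pow a n hna i
    have hbi := aux_coeff_pow b n hnb (p - 1 - i)
    have hsum : i * n + (p - 1 - i) * n = N := by
      rw [hNdef, ← add_mul]
      congr 1
      omega
    have h := aux_coeff_mul (a ^ i) (b ^ (p - 1 - i)) (i * n) ((p - 1 - i) * n) hai.1 hbi.1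
    rw [hsum] at h
    exact ⟨h.1, by rw [h.2, hai.2, hbi.2, ← hL'eq]⟩
  have hs0 : ∀ j < N, PowerSeries.coeff j s = 0 := by
    intro j hj
    rw [hsdef, map_sum]
    exact Finset.sum_eq_zero fun i hi => (hterm i hi).1 j hj
  have hsN : PowerSeries.coeff N s = ∑ i ∈ Finset.range p, L ^ i * L' ^ (p - 1 - i) := by
    rw [hsdef, map_sum]
    exact Finset.sum_congr rfl fun i hi => (hterm i hi).2
  -- compute the degree-zero part of the leading coefficient of s
  set c : R := GradedRing.proj 𝒜 0 L with hcdef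
  have hc0 : c ≠ 0 := hlead0
  have hcmem : c ∈ 𝒜 0 := by
    rw [hcdef, GradedRing.proj_apply]
    exact SetLike.coe_mem _
  have hπc : GradedRing.proj 𝒜 0 c = c := by
    rw [GradedRing.proj_apply]
    exact DirectSum.decompose_of_mem_same 𝒜 hcmem
  have hcnzd : c ∈ nonZeroDivisors R := hnzd c (by rw [hπc]; exact hc0)
  have hπsN : GradedRing.proj 𝒜 0 (PowerSeries.coeff N s) = p • c ^ (p - 1) := by
    rw [hsN, hproj, map_sum]
    rw [Finset.sum_congr rfl (fun i hi => ?_), Finset.sum_const, Finset.card_range]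
    rw [Finset.mem_range] at hi
    rw [map_mul, map_pow, map_pow, ← hproj, ← hproj, ← hcdef, ← hlead, ← pow_add]
    congr 1
    omega
  have hcp : c ^ (p - 1) ≠ 0 := nonZeroDivisors.ne_zero (pow_mem hcnzd _)
  have hπs0 : GradedRing.proj 𝒜 0 (PowerSeries.coeff N s) ≠ 0 := by
    rw [hπsN]
    intro h
    apply hcp
    have h2 : ((p : ℚ)) • c ^ (p - 1) = 0 := by
      rw [Nat.cast_smul_eq_nsmul]; exact h
    have h3 : ((p : ℚ)⁻¹ * (p : ℚ)) • c ^ (p - 1) = 0 := by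
      rw [mul_smul, h2, smul_zero]
    rwa [inv_mul_cancel₀ (by exact_mod_cast hp.ne_zero), one_smul] at h3
  have hsnzd : PowerSeries.coeff N s ∈ nonZeroDivisors R := hnzd _ hπs0
  -- conclude
  by_contra hne
  have hab : a - b ≠ 0 := sub_ne_zero_of_ne hne
  set k := (a - b).order.lift (PowerSeries.order_finite_iff_ne_zero.mpr hab) with hkdef
  have hkz : ∀ i < k, PowerSeries.coeff i (a - b) = 0 := by
    intro i hi
    apply PowerSeries.coeff_of_lt_order
    rw [← ENat.coe_lift (a - b).order (PowerSeries.order_finite_iff_ne_zero.mpr hab)]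
    exact_mod_cast hi
  have hd : PowerSeries.coeff k (a - b) ≠ 0 :=
    by have := PowerSeries.coeff_order hab; rwa [← ENat.lift_eq_toNat_of_lt_top (PowerSeries.order_finite_iff_ne_zero.mpr hab)] at this
  have h := aux_coeff_mul s (a - b) N k hs0 hkz
  rw [hgeom, map_zero] at h
  have h2 : PowerSeries.coeff k (a - b) * PowerSeries.coeff N s = 0 := by
    rw [mul_comm]; exact h.2.symm
  exact hd (mem_nonZeroDivisors_iff_right.mp hsnzd _ h2)
end

section
/- Let R be a commutative ring and p a positive integer. Let a, b ∈ R⟦X⟧ be formal power series with a^p = b^p whose constant coefficients coincide, say c := a(0) = b(0). If p·c^{p−1} is a non-zero-divisor in R, then a = b. -/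
open PowerSeries Finset in
private lemma aux_eq_zero {R : Type*} [CommRing R] (f g : PowerSeries R)
    (h : f * g = 0) (hf : constantCoeff f ∈ nonZeroDivisors R) : g = 0 := by
  ext n
  induction n using Nat.strong_induction_on with
  | _ n ih =>
    have h0 : (coeff n) (f * g) = 0 := by rw [h]; simp
    rw [coeff_mul, Finset.sum_eq_single (0, n)] at h0
    · simpa using hf.2 _ (by simpa [mul_comm] using h0)
    · rintro ⟨i, j⟩ hij hne
      have hj : j < n := by
        rcases Nat.lt_or_ge j n with h' | h'
        · exact h'
        · exfalso
          have : i + j = n := Finset.HasAntidiagonal.mem_antidiagonal.mp hij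
          have : i = 0 ∧ j = n := by omega
          exact hne (by simp [this.1, this.2])
      rw [ih j hj]; simp
    · intro hmem
      exact absurd (Finset.HasAntidiagonal.mem_antidiagonal.mpr (by simp)) hmem

/-- **p-th root uniqueness for power series, coefficientwise induction step.**
If `a ^ p = b ^ p` for power series over a commutative ring, the constant
coefficients of `a` and `b` agree, and `p * c ^ (p - 1)` is a non-zero-divisor
(where `c` is the common constant coefficient), then `a = b`. -/
theorem powerSeries_pow_eq_pow_of_constantCoeff_eq
    {R : Type*} [CommRing R] (p : ℕ) (hp : 0 < p)
    (a b : PowerSeries R) (hpow : a ^ p = b ^ p)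
    (hc : PowerSeries.constantCoeff a = PowerSeries.constantCoeff b)
    (hnzd : (p : R) * (PowerSeries.constantCoeff a) ^ (p - 1) ∈ nonZeroDivisors R) :
    a = b := by
  set S : PowerSeries R := ∑ i ∈ Finset.range p, a ^ i * b ^ (p - 1 - i) with hS
  have hmul : S * (a - b) = 0 := by
    rw [hS, geom_sum₂_mul, hpow, sub_self]
  have hconst : PowerSeries.constantCoeff S = (p : R) *
      (PowerSeries.constantCoeff a) ^ (p - 1) := by
    rw [hS, map_sum]
    rw [Finset.sum_congr rfl (fun i hi => ?_), Finset.sum_const, Finset.card_range,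
      nsmul_eq_mul]
    rw [map_mul, map_pow, map_pow, ← hc, ← pow_add]
    congr 1
    have := Finset.mem_range.mp hi
    omega
  have := aux_eq_zero S (a - b) hmul (hconst ▸ hnzd)
  exact sub_eq_zero.mp this
end

section
/- Let R be a commutative ring graded by the natural numbers, i.e. R = ⊕_{l≥0} R_l is an internal direct sum of additive subgroups with R_k·R_l ⊆ R_{k+l}, and let p be a positive integer. Let a, b ∈ R with a^p = b^p, and suppose the degree-zero graded components of a and b are equal, say a_0 = b_0. If p·a_0^{p−1} is a non-zero-divisor in R, then a = b. -/
open DirectSum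

private lemma aux_binom {R : Type*} [CommRing R] (n : ℕ) (b c : R) :
    ∃ e : R, (b + c) ^ (n + 1) = b ^ (n + 1) + ((n : R) + 1) * b ^ n * c + c * (c * e) := by
  induction n with
  | zero => exact ⟨0, by ring⟩
  | succ n ih =>
    obtain ⟨e, he⟩ := ih
    refine ⟨e * b + ((n : R) + 1) * b ^ n + e * c, ?_⟩
    rw [pow_succ, he]
    push_cast
    ring

private lemma aux_proj_mul {R : Type*} [CommRing R] (𝒜 : ℕ → AddSubgroup R) [GradedRing 𝒜]
    (x y : R) (n : ℕ) (hy : ∀ k < n, (DirectSum.decompose 𝒜 y k : R) = 0) :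
    GradedRing.proj 𝒜 n (x * y) =
      (DirectSum.decompose 𝒜 x 0 : R) * (DirectSum.decompose 𝒜 y n : R) := by
  classical
  rw [GradedRing.proj_apply, DirectSum.decompose_mul, DirectSum.coe_mul_apply]
  rw [Finset.sum_eq_single (0, n)]
  · intro ij hij hne
    simp only [Finset.mem_filter, Finset.mem_product, DFinsupp.mem_support_toFun] at hij
    exfalso
    obtain ⟨⟨hi, hj⟩, hsum⟩ := hij
    have hjn : n ≤ ij.2 := by
      by_contra hlt
      exact hj (Subtype.ext (hy _ (not_le.mp hlt)))
    have hj2 : ij.2 = n := le_antisymm (le_of_add_le_right hsum.le) hjn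
    have hi0 : ij.1 = 0 := by omega
    exact hne (Prod.ext hi0 hj2)
  · intro h
    simp only [Finset.mem_filter, Finset.mem_product, DFinsupp.mem_support_toFun,
      not_and, not_not] at h
    by_cases h1 : DirectSum.decompose 𝒜 x 0 = 0
    · rw [h1]; simp
    · by_cases h2 : DirectSum.decompose 𝒜 y n = 0
      · rw [h2]; simp
      · exact absurd (h ⟨h1, h2⟩ (zero_add n)) (by simp [h1, h2])

/-- **Graded induction step of the p-th root uniqueness lemma.**
Let `R = ⊕_{l ≥ 0} R_l` be an `ℕ`-graded commutative ring and `p` a positive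
integer.  If `a ^ p = b ^ p`, the degree-zero graded components of `a` and `b`
coincide (call it `a₀`), and `p * a₀ ^ (p - 1)` is a non-zero-divisor in `R`,
then `a = b`. -/
theorem graded_pow_eq_pow_of_proj_zero_eq
    {R : Type*} [CommRing R] (𝒜 : ℕ → AddSubgroup R) [GradedRing 𝒜]
    (p : ℕ) (hp : 0 < p) (a b : R) (hpow : a ^ p = b ^ p)
    (h0 : GradedRing.proj 𝒜 0 a = GradedRing.proj 𝒜 0 b)
    (hnzd : (p : R) * (GradedRing.proj 𝒜 0 a) ^ (p - 1) ∈ nonZeroDivisors R) :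
    a = b := by
  classical
  by_contra hne
  set c : R := a - b with hc
  have hc0 : c ≠ 0 := sub_ne_zero.mpr hne
  -- the decomposition of c has nonempty support
  have hdec : DirectSum.decompose 𝒜 c ≠ 0 := fun h => hc0 (by
    have := congrArg (DirectSum.decompose 𝒜).symm h
    simpa using this)
  have hsupp : (DirectSum.decompose 𝒜 c).support.Nonempty := by
    rw [Finset.nonempty_iff_ne_empty]
    intro h
    exact hdec (DFinsupp.support_eq_empty.mp h)
  set n : ℕ := (DirectSum.decompose 𝒜 c).support.min' hsupp with hn
  have hnmem : n ∈ (DirectSum.decompose 𝒜 c).support := Finset.min'_mem _ _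
  have hcn : DirectSum.decompose 𝒜 c n ≠ 0 := DFinsupp.mem_support_toFun _ _ |>.mp hnmem
  have hlow : ∀ k < n, (DirectSum.decompose 𝒜 c k : R) = 0 := by
    intro k hk
    have : k ∉ (DirectSum.decompose 𝒜 c).support := fun hmem =>
      absurd (Finset.min'_le _ _ hmem) (not_le.mpr hk)
    rw [DFinsupp.notMem_support_iff.mp this]
    rfl
  -- degree zero component of c is zero
  have hc0' : (DirectSum.decompose 𝒜 c 0 : R) = 0 := by
    have : GradedRing.proj 𝒜 0 c = 0 := by
      rw [hc, map_sub, h0, sub_self]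
    rwa [GradedRing.proj_apply] at this
  -- binomial identity
  obtain ⟨q, hq⟩ := Nat.exists_eq_add_of_lt hp
  have hq' : p = (p - 1) + 1 := by omega
  obtain ⟨e, he⟩ := aux_binom (p - 1) b c
  have hbc : b + c = a := by rw [hc]; ring
  rw [hbc, ← hq'] at he
  have hkey : ((p : R)) * b ^ (p - 1) * c + c * (c * e) = 0 := by
    have hcast : ((p - 1 : ℕ) : R) + 1 = (p : R) := by
      rw [hq']; push_cast; ring
    have := he
    rw [hcast] at this
    rw [hpow] at this
    linear_combination -this
  -- apply proj n
  have hproj1 : GradedRing.proj 𝒜 n (((p : R)) * b ^ (p - 1) * c) =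
      ((p : R) * (GradedRing.proj 𝒜 0 a) ^ (p - 1)) * (DirectSum.decompose 𝒜 c n : R) := by
    rw [aux_proj_mul 𝒜 _ c n hlow]
    congr 1
    have : (DirectSum.decompose 𝒜 ((p : R) * b ^ (p - 1)) 0 : R) =
        GradedRing.projZeroRingHom 𝒜 ((p : R) * b ^ (p - 1)) := rfl
    rw [this, map_mul, map_natCast, map_pow]
    rw [h0]
    rfl
  have hproj2 : GradedRing.proj 𝒜 n (c * (c * e)) = 0 := by
    rw [mul_comm c (c * e), aux_proj_mul 𝒜 _ c n hlow]
    have : (DirectSum.decompose 𝒜 (c * e) 0 : R) =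
        GradedRing.projZeroRingHom 𝒜 (c * e) := rfl
    rw [this, map_mul]
    have hz : GradedRing.projZeroRingHom 𝒜 c = 0 := by
      show (DirectSum.decompose 𝒜 c 0 : R) = 0
      exact hc0'
    rw [hz, zero_mul, zero_mul]
  have hsum : GradedRing.proj 𝒜 n (((p : R)) * b ^ (p - 1) * c + c * (c * e)) = 0 := by
    rw [hkey, map_zero]
  rw [map_add, hproj1, hproj2, add_zero] at hsum
  rw [mul_comm] at hsum
  have := hnzd.2 _ hsum
  exact hcn (Subtype.ext (by simpa using this))
end

section
/- Let p be an odd prime, ζ ∈ ℂ a primitive p-th root of unity, and n an integer not divisible by p. Let I be a finite type, let φ : I → ℂ⟦z⟧ be a family of formal power series, and let g : I × I → ℂ⟦z⟧ be a family of formal power series whose constant coefficients satisfy g_{a,b}(0) = 1 if a = b and g_{a,b}(0) = 0 otherwise. Suppose that for every a ∈ I one has ζ^n · rescale_{ζ^n}(φ_a) = Σ_{b∈I} g_{a,b}·φ_b in ℂ⟦z⟧, where rescale_c sends a power series Σ_m c_m z^m to Σ_m c^m·c_m z^m. Then for every a ∈ I and every m with 0 ≤ m ≤ p − 2, the coefficient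 of z^m in φ_a is zero; that is, each φ_a vanishes to order at least p − 1. -/
/-- **Local vanishing of equivariant Higgs field matrix entries (equation `eq:paj2`).**
Let `p` be an odd prime, `ζ` a primitive `p`-th root of unity in `ℂ`, and `n`
an integer not divisible by `p`.  Let `φ : I → ℂ⟦z⟧` be a finite family of
power series and `g : I × I → ℂ⟦z⟧` a family whose constant terms are the
Kronecker delta.  If `ζ^n · rescale_{ζ^n}(φ_a) = ∑_b g_{a,b} · φ_b` for each
`a`, then every `φ_a` vanishes to order at least `p - 1`. -/
theorem equivariant_power_series_vanishing
    {p : ℕ} (hp : p.Prime) (hodd : Odd p) (ζ : ℂ)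
    (hζ : IsPrimitiveRoot ζ p) (n : ℤ) (hn : ¬ (p : ℤ) ∣ n)
    {I : Type*} [Fintype I] [DecidableEq I]
    (φ : I → PowerSeries ℂ) (g : I × I → PowerSeries ℂ)
    (hg : ∀ a b : I,
      PowerSeries.constantCoeff (g (a, b)) = if a = b then 1 else 0)
    (heq : ∀ a : I,
      PowerSeries.C (ζ ^ n) * PowerSeries.rescale (ζ ^ n) (φ a) =
        ∑ b : I, g (a, b) * φ b)
    (a : I) (m : ℕ) (hm : m ≤ p - 2) :
    PowerSeries.coeff m (φ a) = 0 := by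
  induction m using Nat.strong_induction_on generalizing a with
  | _ m ih =>
    have key := congrArg (PowerSeries.coeff m) (heq a)
    rw [PowerSeries.coeff_C_mul, PowerSeries.coeff_rescale, map_sum] at key
    -- compute each summand
    have hsum : ∀ b : I, PowerSeries.coeff m (g (a, b) * φ b) =
        (if a = b then 1 else 0) * PowerSeries.coeff m (φ a) := by
      intro b
      rw [PowerSeries.coeff_mul]
      rw [Finset.sum_eq_single (0, m)]
      · rw [PowerSeries.coeff_zero_eq_constantCoeff, hg a b]
        by_cases hab : a = b <;> simp [hab]
      · rintro ⟨i, j⟩ hij hne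
        rw [Finset.HasAntidiagonal.mem_antidiagonal] at hij
        have hj : j < m := by
          by_contra h
          push_neg at h
          have hj' : j = m := by omega
          have hi : i = 0 := by omega
          exact hne (by simp [hi, hj'])
        rw [ih j hj b (by omega), mul_zero]
      · intro h
        simp [Finset.mem_antidiagonal] at h
    rw [Finset.sum_congr rfl (fun b _ => hsum b)] at key
    rw [← Finset.sum_mul, Finset.sum_ite_eq Finset.univ a (fun _ => (1 : ℂ)),
      if_pos (Finset.mem_univ a), one_mul] at key
    -- key : ζ^n * ((ζ^n)^m * coeff m (φ a)) = coeff m (φ a)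
    have key2 : ((ζ ^ n) ^ (m + 1) - 1) * PowerSeries.coeff m (φ a) = 0 := by
      rw [sub_mul, one_mul, sub_eq_zero, pow_succ', mul_assoc]
      exact key
    have hne1 : (ζ ^ n) ^ (m + 1) ≠ 1 := by
      rw [← zpow_natCast (ζ ^ n) (m + 1), ← zpow_mul]
      intro h1
      rw [hζ.zpow_eq_one_iff_dvd] at h1
      revert h1
      intro hdvd
      have hpZ : Prime (p : ℤ) := Nat.prime_iff_prime_int.mp hp
      rcases hpZ.dvd_mul.mp hdvd with h | h
      · exact hn h
      · have : (p : ℤ) ∣ ((m + 1 : ℕ) : ℤ) := by exact_mod_cast h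
        have hdn : p ∣ m + 1 := Int.ofNat_dvd.mp this
        have := Nat.le_of_dvd (Nat.succ_pos m) hdn
        have hp2 : 2 ≤ p := hp.two_le
        omega
    have := sub_ne_zero.mpr hne1
    exact (mul_eq_zero.mp key2).resolve_left this
end

section
/- Let p be a prime, X a type, and f : X → X a bijection with f^p = id, generating an action of ℤ/pℤ on X. Let X^f denote the fixed-point set of f and X̃ the set of f-orbits with quotient map π : X → X̃. Fix c ∈ ℕ. Then the assignment (j, D̃) ↦ D, where D(x) = j(x) + p·D̃(π(x)) for x ∈ X^f and D(x) = D̃(π(x)) for x ∉ X^f, defines a bijection from the set of pairs (j, D̃) — with j : X^f → {0,…,p−1} finitely supported, D̃ : X̃ → ℕ finitely supported, and p·(Σ_{ỹ∈X̃} D̃(ỹ)) + Σ_{x∈X^f} j(x) = c — onto the set of f-invariant finitely supported functions D : X → ℕ with D∘f = D and Σ_{x∈X} D(x) = c. -/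
open Function Set

section aux

variable {X Xq : Type*} {p : ℕ}

private lemma iter_mod {f : X → X} (hfp : f^[p] = id) (k : ℕ) :
    f^[k] = f^[k % p] := by
  conv_lhs => rw [← Nat.mod_add_div k p]
  rw [Function.iterate_add, Function.iterate_mul, hfp, Function.iterate_id,
    Function.comp_id]

private lemma fix_unique {f : X → X} {π : X → Xq}
    (hfib : ∀ x y : X, π x = π y ↔ ∃ k : ℕ, f^[k] x = y)
    {x y : X} (hx : f x = x) (hxy : π x = π y) : y = x := by
  obtain ⟨k, hk⟩ := (hfib x y).1 hxy
  rw [Function.iterate_fixed hx] at hk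
  exact hk.symm

private lemma fiber_eq {f : X → X} {π : X → Xq} (hp : 0 < p) (hfp : f^[p] = id)
    (hfib : ∀ x y : X, π x = π y ↔ ∃ k : ℕ, f^[k] x = y) (x : X) :
    π ⁻¹' {π x} = Set.range (fun k : Fin p => f^[(k : ℕ)] x) := by
  ext y
  simp only [mem_preimage, mem_singleton_iff, mem_range]
  constructor
  · intro h
    obtain ⟨k, hk⟩ := (hfib x y).1 h.symm
    exact ⟨⟨k % p, Nat.mod_lt _ hp⟩, by rw [← iter_mod hfp k]; exact hk⟩
  · rintro ⟨k, rfl⟩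
    exact ((hfib x _).2 ⟨(k : ℕ), rfl⟩).symm

private lemma fiber_finite {f : X → X} {π : X → Xq} (hp : 0 < p) (hfp : f^[p] = id)
    (hfib : ∀ x y : X, π x = π y ↔ ∃ k : ℕ, f^[k] x = y) (hπ : Surjective π) (y : Xq) :
    (π ⁻¹' {y}).Finite := by
  obtain ⟨x, rfl⟩ := hπ y
  rw [fiber_eq hp hfp hfib x]
  exact Set.finite_range _

private lemma fixed_of_iter (hp : p.Prime) {f : X → X} (hfp : f^[p] = id)
    {x : X} {d : ℕ} (hd : 0 < d) (hdp : d < p) (hx : f^[d] x = x) : f x = x := by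
  have hcop : Nat.Coprime d p :=
    Nat.Coprime.symm ((Nat.Prime.coprime_iff_not_dvd hp).2 (Nat.not_dvd_of_pos_of_lt hd hdp))
  obtain ⟨m, -, hm⟩ := Nat.exists_mul_mod_eq_one_of_coprime hcop hp.one_lt
  have h1 : f^[d * m] x = x := by
    rw [Function.iterate_mul]
    exact Function.iterate_fixed hx m
  rwa [iter_mod hfp (d * m), hm, Function.iterate_one] at h1

private lemma fiber_ncard (hp : p.Prime) {f : X → X} {π : X → Xq}
    (hf : Function.Bijective f) (hfp : f^[p] = id)
    (hfib : ∀ x y : X, π x = π y ↔ ∃ k : ℕ, f^[k] x = y)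
    {x : X} (hx : f x ≠ x) : (π ⁻¹' {π x}).ncard = p := by
  have hinj : Function.Injective (fun k : Fin p => f^[(k : ℕ)] x) := by
    have key : ∀ a b : Fin p, (a : ℕ) ≤ (b : ℕ) → f^[(a : ℕ)] x = f^[(b : ℕ)] x → a = b := by
      intro a b hab h
      by_contra hne
      have hd : 0 < (b : ℕ) - (a : ℕ) := by
        have : (a : ℕ) ≠ (b : ℕ) := fun h' => hne (Fin.ext h')
        omega
      have hdp : (b : ℕ) - (a : ℕ) < p := lt_of_le_of_lt (Nat.sub_le _ _) b.2
      -- f^[b] x = f^[b-a] (f^[a] x)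
      have hb : f^[(b : ℕ) - (a : ℕ)] (f^[(a : ℕ)] x) = f^[(a : ℕ)] x := by
        rw [← Function.iterate_add_apply, Nat.sub_add_cancel hab, ← h]
      have hy : f (f^[(a : ℕ)] x) = f^[(a : ℕ)] x :=
        fixed_of_iter hp hfp hd hdp hb
      rw [← Function.iterate_succ_apply' f (a : ℕ) x,
        Function.iterate_succ_apply f (a : ℕ) x] at hy
      exact hx ((hf.injective.iterate (a : ℕ)) hy)
    intro a b h
    rcases le_total (a : ℕ) (b : ℕ) with hab | hab
    · exact key a b hab h
    · exact (key b a hab h.symm).symm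
  rw [fiber_eq hp.pos hfp hfib x, ← Set.image_univ, Set.ncard_image_of_injective _ hinj,
    Set.ncard_univ, Nat.card_eq_fintype_card, Fintype.card_fin]

open Classical in
private lemma sum_eq (hp : p.Prime) {f : X → X} {π : X → Xq}
    (hf : Function.Bijective f) (hfp : f^[p] = id) (hπ : Surjective π)
    (hfib : ∀ x y : X, π x = π y ↔ ∃ k : ℕ, f^[k] x = y)
    (j : {x : X // f x = x} → ℕ) (D : Xq → ℕ)
    (hj : (Function.support j).Finite) (hD : (Function.support D).Finite) :
    ∑ᶠ x : X, (if h : f x = x then j ⟨x, h⟩ + p * D (π x) else D (π x))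
      = p * (∑ᶠ y, D y) + ∑ᶠ x, j x := by
  classical
  set j' : X → ℕ := fun x => if h : f x = x then j ⟨x, h⟩ else 0 with hj'def
  set g : X → ℕ := fun x => if f x = x then p * D (π x) else D (π x) with hgdef
  have hsplit : (fun x : X => if h : f x = x then j ⟨x, h⟩ + p * D (π x) else D (π x))
      = fun x => j' x + g x := by
    funext x
    by_cases hx : f x = x <;> simp [hj'def, hgdef, hx]
  have hj'fin : (Function.support j').Finite := by
    refine Set.Finite.subset (hj.image Subtype.val) ?_
    intro x hx
    simp only [Function.mem_support, hj'def] at hx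
    by_cases h : f x = x
    · rw [dif_pos h] at hx
      exact ⟨⟨x, h⟩, hx, rfl⟩
    · rw [dif_neg h] at hx; exact absurd rfl hx
  have hgfin : (Function.support g).Finite := by
    refine Set.Finite.subset (Set.Finite.biUnion hD
      (fun y _ => fiber_finite hp.pos hfp hfib hπ y)) ?_
    intro x hx
    simp only [Function.mem_support, hgdef] at hx
    have hDx : D (π x) ≠ 0 := by
      by_cases h : f x = x <;> simp [h] at hx <;> tauto
    exact Set.mem_biUnion hDx rfl
  rw [hsplit, finsum_add_distrib hj'fin hgfin]
  have hjsum : ∑ᶠ x : X, j' x = ∑ᶠ x, j x := by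
    have h1 : ∑ᶠ x : X, j' x = ∑ᶠ x ∈ {x : X | f x = x}, j' x := by
      rw [← finsum_mem_univ j']
      refine finsum_mem_inter_support_eq' j' _ _ (fun x hx => ?_)
      simp only [Set.mem_univ, true_iff, Set.mem_setOf_eq]
      simp only [Function.mem_support, hj'def] at hx
      by_contra h
      rw [dif_neg h] at hx
      exact hx rfl
    rw [h1, ← finsum_set_coe_eq_finsum_mem]
    apply finsum_congr
    intro x
    exact dif_pos x.2
  have hgsum : ∑ᶠ x : X, g x = p * ∑ᶠ y, D y := by
    have key : ∀ y : Xq, ∑ᶠ x ∈ π ⁻¹' {y}, g x = p * D y := by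
      intro y
      obtain ⟨x, rfl⟩ := hπ y
      by_cases hx : f x = x
      · have hfib1 : π ⁻¹' {π x} = {x} := by
          apply Set.eq_singleton_iff_unique_mem.2
          exact ⟨rfl, fun z hz => fix_unique hfib hx (Set.mem_singleton_iff.1 hz).symm⟩
        rw [hfib1, finsum_mem_singleton]
        simp [hgdef, hx]
      · have hfin := fiber_finite hp.pos hfp hfib hπ (π x)
        have hall : ∀ z ∈ hfin.toFinset, g z = D (π x) := by
          intro z hz
          rw [Set.Finite.mem_toFinset] at hz
          have hz' : π z = π x := hz
          have hzn : f z ≠ z := by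
            intro h
            have hxz : x = z := fix_unique hfib h hz'
            exact hx (by rw [hxz]; exact h)
          simp [hgdef, hzn, hz']
        rw [finsum_mem_eq_finite_toFinset_sum _ hfin, Finset.sum_congr rfl hall,
          Finset.sum_const, smul_eq_mul]
        congr 1
        rw [← Set.ncard_eq_toFinset_card _ hfin]
        exact fiber_ncard hp hf hfp hfib hx
    have hsupp : Function.support g = ⋃ y ∈ Function.support D, π ⁻¹' {y} := by
      ext x
      simp only [Function.mem_support, hgdef, Set.mem_iUnion, Set.mem_preimage,
        Set.mem_singleton_iff]
      constructor
      · intro hx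
        refine ⟨π x, ?_, rfl⟩
        by_cases h : f x = x <;> simp [h] at hx <;> simp [Function.mem_support] <;> tauto
      · rintro ⟨y, hy, rfl⟩
        by_cases h : f x = x <;> simp [h, hy, hp.ne_zero, Function.mem_support.1 hy]
    calc ∑ᶠ x : X, g x = ∑ᶠ x ∈ Set.univ, g x := (finsum_mem_univ g).symm
      _ = ∑ᶠ x ∈ Set.univ ∩ Function.support g, g x := (finsum_mem_inter_support g _).symm
      _ = ∑ᶠ x ∈ ⋃ y ∈ Function.support D, π ⁻¹' {y}, g x := by rw [Set.univ_inter, hsupp]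
      _ = ∑ᶠ y ∈ Function.support D, ∑ᶠ x ∈ π ⁻¹' {y}, g x := by
          refine finsum_mem_biUnion ?_ hD (fun y _ => fiber_finite hp.pos hfp hfib hπ y)
          intro a _ b _ hab
          exact Disjoint.preimage π (Set.disjoint_singleton.2 hab)
      _ = ∑ᶠ y ∈ Function.support D, p * D y := finsum_mem_congr rfl (fun y _ => key y)
      _ = ∑ᶠ y ∈ Set.univ, p * D y := by
          refine finsum_mem_inter_support_eq' _ _ _ (fun y hy => ?_)
          simp only [Set.mem_univ, iff_true, Function.mem_support]
          simp only [Function.mem_support] at hy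
          exact fun h0 => hy (by simp [h0])
      _ = ∑ᶠ y, p * D y := finsum_mem_univ _
      _ = p * ∑ᶠ y, D y := (mul_finsum D p).symm
  rw [hjsum, hgsum, add_comm]

end aux

open Classical in
/-- **Combinatorial core of Lemma `lem:S^m(C)^f`, part (1).** -/
theorem fixedPoint_divisor_decomposition_bijective
    {X Xq : Type*} {p : ℕ} (hp : p.Prime) (f : X → X)
    (hf : Function.Bijective f) (hfp : f^[p] = id)
    (π : X → Xq) (hπ : Function.Surjective π)
    (hfib : ∀ x y : X, π x = π y ↔ ∃ k : ℕ, f^[k] x = y) (c : ℕ) :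
    Set.BijOn
      (fun jD : ({x : X // f x = x} → ℕ) × (Xq → ℕ) => fun x : X =>
        if h : f x = x then jD.1 ⟨x, h⟩ + p * jD.2 (π x) else jD.2 (π x))
      {jD | (Function.support jD.1).Finite ∧ (∀ x, jD.1 x ≤ p - 1) ∧
        (Function.support jD.2).Finite ∧
        p * (∑ᶠ y, jD.2 y) + ∑ᶠ x, jD.1 x = c}
      {D : X → ℕ | (Function.support D).Finite ∧ D ∘ f = D ∧ ∑ᶠ x, D x = c} := by
  classical
  refine ⟨?_, ?_, ?_⟩
  · -- MapsTo
    rintro ⟨j, D⟩ ⟨hj, hjle, hD, hsum⟩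
    simp only [Set.mem_setOf_eq]
    refine ⟨?_, ?_, ?_⟩
    · refine Set.Finite.subset ((hj.image Subtype.val).union
        (Set.Finite.biUnion hD (fun y _ => fiber_finite hp.pos hfp hfib hπ y))) ?_
      intro x hx
      simp only [Function.mem_support] at hx
      by_cases h : f x = x
      · rw [dif_pos h] at hx
        rcases Nat.eq_zero_or_pos (j ⟨x, h⟩) with h0 | h0
        · have hD0 : D (π x) ≠ 0 := by
            intro hD0; exact hx (by simp [h0, hD0])
          exact Or.inr (Set.mem_biUnion hD0 rfl)
        · exact Or.inl ⟨⟨x, h⟩, h0.ne', rfl⟩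
      · rw [dif_neg h] at hx
        exact Or.inr (Set.mem_biUnion hx rfl)
    · funext x
      by_cases hx : f x = x
      · simp only [Function.comp_apply, hx]
      · have hfx : f (f x) ≠ f x := fun h => hx (hf.injective h)
        have hπx : π (f x) = π x := ((hfib x (f x)).2 ⟨1, rfl⟩).symm
        simp only [Function.comp_apply, dif_neg hx, dif_neg hfx, hπx]
    · exact (sum_eq hp hf hfp hπ hfib j D hj hD).trans hsum
  · -- InjOn
    rintro ⟨j1, D1⟩ ⟨hj1, hle1, hD1, -⟩ ⟨j2, D2⟩ ⟨hj2, hle2, hD2, -⟩ heq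
    have hplt : ∀ (jj : {x : X // f x = x} → ℕ), (∀ x, jj x ≤ p - 1) → ∀ x, jj x < p :=
      fun jj h x => lt_of_le_of_lt (h x) (Nat.sub_lt hp.pos one_pos)
    have hDeq : D1 = D2 := by
      funext y
      obtain ⟨x, rfl⟩ := hπ y
      have hx := congrFun heq x
      by_cases h : f x = x
      · simp only [dif_pos h] at hx
        have h1 : D1 (π x) = (j1 ⟨x, h⟩ + p * D1 (π x)) / p := by
          rw [Nat.add_mul_div_left _ _ hp.pos, Nat.div_eq_of_lt (hplt j1 hle1 _), zero_add]
        have h2 : D2 (π x) = (j2 ⟨x, h⟩ + p * D2 (π x)) / p := by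
          rw [Nat.add_mul_div_left _ _ hp.pos, Nat.div_eq_of_lt (hplt j2 hle2 _), zero_add]
        rw [h1, h2, hx]
      · simpa only [dif_neg h] using hx
    have hjeq : j1 = j2 := by
      funext x
      have hx := congrFun heq x.1
      simp only [dif_pos x.2, hDeq] at hx
      exact Nat.add_right_cancel hx
    simp only [Prod.mk.injEq]
    exact ⟨hjeq, hDeq⟩
  · -- SurjOn
    rintro D ⟨hDfin, hDf, hDsum⟩
    have hπ2 := hπ
    choose s hs using hπ
    have hconst : ∀ x y : X, π x = π y → D x = D y := by
      intro x y hxy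
      obtain ⟨k, rfl⟩ := (hfib x y).1 hxy
      clear hxy
      induction k with
      | zero => rfl
      | succ n ih =>
        rw [Function.iterate_succ_apply',
          show D (f (f^[n] x)) = D (f^[n] x) from congrFun hDf _]
        exact ih
    set jj : {x : X // f x = x} → ℕ := fun x => D x.1 % p with hjjdef
    set Dt : Xq → ℕ := fun y => if f (s y) = s y then D (s y) / p else D (s y) with hDtdef
    have hsfix : ∀ (x : X), f x = x → s (π x) = x := fun x hx =>
      fix_unique hfib hx (hs (π x)).symm
    have hsnonfix : ∀ (x : X), f x ≠ x → f (s (π x)) ≠ s (π x) := by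
      intro x hx h
      have hxz : x = s (π x) := fix_unique hfib h (hs (π x))
      exact hx (by rw [hxz]; exact h)
    have hΦ : (fun x : X => if h : f x = x then jj ⟨x, h⟩ + p * Dt (π x) else Dt (π x)) = D := by
      funext x
      by_cases hx : f x = x
      · rw [dif_pos hx]
        have h1 : Dt (π x) = D x / p := by
          simp only [hDtdef, hsfix x hx, if_pos hx]
        rw [h1]
        simp only [hjjdef]
        exact Nat.mod_add_div (D x) p
      · rw [dif_neg hx]
        simp only [hDtdef, if_neg (hsnonfix x hx)]
        exact hconst _ _ (hs (π x))
    have h1fin : (Function.support jj).Finite := by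
      refine Set.Finite.subset (hDfin.preimage (Subtype.val_injective.injOn)) ?_
      intro x hx
      simp only [Function.mem_support, hjjdef] at hx
      simp only [Set.mem_preimage, Function.mem_support]
      intro h0; exact hx (by simp [h0])
    have h3fin : (Function.support Dt).Finite := by
      have hsinj : Function.Injective s := Function.LeftInverse.injective hs
      refine Set.Finite.subset (hDfin.preimage hsinj.injOn) ?_
      intro y hy
      simp only [Function.mem_support, hDtdef] at hy
      simp only [Set.mem_preimage, Function.mem_support]
      intro h0
      apply hy
      by_cases h : f (s y) = s y <;> simp [h, h0]
    have h4 : p * (∑ᶠ y, Dt y) + ∑ᶠ x, jj x = c := by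
      have hse := sum_eq hp hf hfp hπ2 hfib jj Dt h1fin h3fin
      rw [hΦ] at hse
      exact hse.symm.trans hDsum
    exact ⟨(jj, Dt), ⟨h1fin, fun x => Nat.le_pred_of_lt (Nat.mod_lt _ hp.pos), h3fin, h4⟩, hΦ⟩
end
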